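/- Let F be the set of functions V → V (V = {0, 1/2, 1}) generated from the identity function by closure under pointwise negation (¬p = 1-p), pointwise max (∨), pointwise min (∧), and composition with ◇₁ (◇₁: 1↦1/2, 1/2↦0, 0↦0). Then the function h : V → V defined by h(1) = 1, h(1/2) = 0, h(0) = 1/2 does not belong to F. -/
import Mathlib


/-- The three Kleene truth values 0, 1/2, 1. -/
inductive Tv | zero | half | one
deriving DecidableEq

/-- Kleene negation ¬p = 1 - p. -/
def tneg : Tv → Tv
  | .zero => .one | .half => .half | .one => .zero

/-- Max with respect to 0 < 1/2 < 1 (disjunction). -/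
def tmax : Tv → Tv → Tv
  | .one, _ => .one | _, .one => .one
  | .half, _ => .half | _, .half => .half
  | .zero, .zero => .zero

/-- Min with respect to 0 < 1/2 < 1 (conjunction). -/
def tmin : Tv → Tv → Tv
  | .zero, _ => .zero | _, .zero => .zero
  | .half, _ => .half | _, .half => .half
  | .one, .one => .one

/-- ◇₁ : 1 ↦ 1/2, 1/2 ↦ 0, 0 ↦ 0. -/
def td1 : Tv → Tv
  | .one => .half | .half => .zero | .zero => .zero

/-- The clone of unary functions generated from the identity under pointwise
    negation, max, min, and composition with ◇₁ (formulas of K₃ˢ + ◇₁ in one variable). -/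
inductive InF : (Tv → Tv) → Prop
  | id : InF id
  | neg : ∀ f, InF f → InF (fun p => tneg (f p))
  | max : ∀ f g, InF f → InF g → InF (fun p => tmax (f p) (g p))
  | min : ∀ f g, InF f → InF g → InF (fun p => tmin (f p) (g p))
  | dia : ∀ f, InF f → InF (fun p => td1 (f p))


def Q (a b c : Tv) : Prop := (a = Tv.zero ∧ b = Tv.zero ∧ c = Tv.zero) ∨ (a = Tv.zero ∧ b = Tv.zero ∧ c = Tv.half) ∨ (a = Tv.zero ∧ b = Tv.half ∧ c = Tv.zero) ∨ (a = Tv.zero ∧ b = Tv.half ∧ c = Tv.half) ∨ (a = Tv.zero ∧ b = Tv.half ∧ c = Tv.one) ∨ (a = Tv.half ∧ b = Tv.zero ∧ c = Tv.zero) ∨ (a = Tv.half ∧ b = Tv.zero ∧ c = Tv.half) ∨ (a = Tv.half ∧ b = Tv.half ∧ c = Tv.zero) ∨ (a = Tv.half ∧ b = Tv.half ∧ c = Tv.half) ∨ (a = Tv.half ∧ b = Tv.half ∧ c = Tv.one) ∨ (a = Tv.half ∧ b = Tv.one ∧ c = Tv.half) ∨ (a = Tv.half ∧ b = Tv.one ∧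 c = Tv.one) ∨ (a = Tv.one ∧ b = Tv.half ∧ c = Tv.zero) ∨ (a = Tv.one ∧ b = Tv.half ∧ c = Tv.half) ∨ (a = Tv.one ∧ b = Tv.half ∧ c = Tv.one) ∨ (a = Tv.one ∧ b = Tv.one ∧ c = Tv.half) ∨ (a = Tv.one ∧ b = Tv.one ∧ c = Tv.one)

instance : Fintype Tv :=
  ⟨{.zero, .half, .one}, by intro x; cases x <;> simp⟩

instance (a b c : Tv) : Decidable (Q a b c) := by unfold Q; infer_instance

def Pf (f : Tv → Tv) : Prop := Q (f .zero) (f .half) (f .one)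

lemma inF_P : ∀ f, InF f → Pf f := by
  intro f h
  induction h with
  | id => unfold Pf Q; simp
  | neg f _ ih =>
      unfold Pf at *
      revert ih
      have : ∀ a b c, Q a b c → Q (tneg a) (tneg b) (tneg c) := by decide
      exact this _ _ _
  | dia f _ ih =>
      unfold Pf at *
      revert ih
      have : ∀ a b c, Q a b c → Q (td1 a) (td1 b) (td1 c) := by decide
      exact this _ _ _
  | max f g _ _ ihf ihg =>
      unfold Pf at *
      revert ihf ihg
      have : ∀ a b c a' b' c', Q a b c → Q a' b' c' → Q (tmax a a') (tmax b b') (tmax c c') := by decide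
      exact this _ _ _ _ _ _
  | min f g _ _ ihf ihg =>
      unfold Pf at *
      revert ihf ihg
      have : ∀ a b c a' b' c', Q a b c → Q a' b' c' → Q (tmin a a') (tmin b b') (tmin c c') := by decide
      exact this _ _ _ _ _ _

theorem not_definable_with_d1 :
    ¬ InF (fun p => match p with | .one => .one | .half => .zero | .zero => .half) := by
  intro h
  have := inF_P _ h
  revert this
  unfold Pf Q
  decide
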